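/- Fix constants B > 0, D > 0 and u₂ > 1, and let f(t) = t + (2^{D/(B t)} − 1)·t/u₂. If x ≥ 0 satisfies x·e^x = (u₂ − 1)/e, then t* = (ln 2)·D/(B·(x + 1)) is a stationary point of f: the derivative of f at t* equals 0. -/

import Mathlib

theorem stmt_4 (B D u₂ x : ℝ) (hB : 0 < B) (hD : 0 < D) (hu : 1 < u₂)
    (hx : 0 ≤ x) (hxe : x * Real.exp x = (u₂ - 1) / Real.exp 1) :
    deriv (fun t : ℝ => t + ((2 : ℝ) ^ (D / (B * t)) - 1) * t / u₂)
        (Real.log 2 * D / (B * (x + 1))) = 0 := by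
  have h2 : (0:ℝ) < 2 := by norm_num
  set t₀ := Real.log 2 * D / (B * (x + 1)) with ht₀
  have hlog2 : 0 < Real.log 2 := Real.log_pos (by norm_num)
  have hx1 : 0 < x + 1 := by linarith
  have hBx : 0 < B * (x + 1) := mul_pos hB hx1
  have ht0pos : 0 < t₀ := div_pos (mul_pos hlog2 hD) hBx
  have ht0ne : t₀ ≠ 0 := ne_of_gt ht0pos
  have hBne : B ≠ 0 := ne_of_gt hB
  have hune : u₂ ≠ 0 := by linarith
  have hkey : Real.log 2 * (D / B * t₀⁻¹) = x + 1 := by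
    rw [ht₀]; field_simp
  have hfun : (fun t : ℝ => t + ((2:ℝ) ^ (D / (B * t)) - 1) * t / u₂)
      = fun t : ℝ => t + (Real.exp (Real.log 2 * (D / B * t⁻¹)) - 1) * t / u₂ := by
    funext t
    rw [Real.rpow_def_of_pos h2]
    congr 3
    rw [div_eq_mul_inv, mul_inv, div_eq_mul_inv, mul_assoc]
  rw [hfun]
  have h1 : HasDerivAt (fun t : ℝ => D / B * t⁻¹) (D / B * -(t₀ ^ 2)⁻¹) t₀ :=
    (hasDerivAt_inv ht0ne).const_mul (D / B)
  have h2exp : HasDerivAt (fun t : ℝ => Real.exp (Real.log 2 * (D / B * t⁻¹)))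
      (Real.exp (Real.log 2 * (D / B * t₀⁻¹)) * (Real.log 2 * (D / B * -(t₀ ^ 2)⁻¹))) t₀ :=
    (h1.const_mul (Real.log 2)).exp
  have hmul : HasDerivAt (fun t : ℝ => (Real.exp (Real.log 2 * (D / B * t⁻¹)) - 1) * t)
      (Real.exp (Real.log 2 * (D / B * t₀⁻¹)) * (Real.log 2 * (D / B * -(t₀ ^ 2)⁻¹)) * t₀
        + (Real.exp (Real.log 2 * (D / B * t₀⁻¹)) - 1) * 1) t₀ :=
    (h2exp.sub_const 1).mul (hasDerivAt_id t₀)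
  have htot := (hasDerivAt_id t₀).add (hmul.div_const u₂)
  simp only [Pi.add_def, id] at htot
  rw [htot.deriv]
  rw [hkey]
  have hE : x * Real.exp (x + 1) = u₂ - 1 := by
    rw [Real.exp_add]
    have h := congrArg (· * Real.exp 1) hxe
    rw [div_mul_cancel₀ _ (Real.exp_ne_zero 1)] at h
    linarith [h]
  -- log 2 * (D/B) = (x+1) * t₀
  have hc : Real.log 2 * (D / B) = (x + 1) * t₀ := by
    field_simp at hkey ⊢
    linarith [hkey]
  have ht2 : t₀ ^ 2 ≠ 0 := pow_ne_zero 2 ht0ne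
  have hc' : Real.log 2 * D = (x + 1) * t₀ * B := by
    field_simp at hc; linarith
  field_simp
  linear_combination (-Real.exp (x + 1)) * hc' + (-(B * t₀)) * hE
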